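/- The cardinality of the set M_d of permutations σ of Fin(2d) such that σ maps {0,...,d-1} onto {d,...,2d-1} and σ² has the form τ·ω^d(τ) for some τ ∈ S_d, equals p(d)·d!, where p(d) is the number of partitions of d. -/

import Mathlib

/-- The shift of a permutation of `ℕ` up by `d`: fixes `{0,…,d-1}` and acts as `σ`
conjugated by `k ↦ k + d` above. -/
def shift (d : ℕ) (σ : Equiv.Perm ℕ) : Equiv.Perm ℕ where
  toFun k := if k < d then k else σ (k - d) + d
  invFun k := if k < d then k else σ⁻¹ (k - d) + d
  left_inv k := by
    by_cases h : k < d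
    · simp [h]
    · dsimp only
      rw [if_neg h, if_neg (by omega), Nat.add_sub_cancel, Equiv.Perm.coe_inv, Equiv.symm_apply_apply]
      omega
  right_inv k := by
    by_cases h : k < d
    · simp [h]
    · dsimp only
      rw [if_neg h, if_neg (by omega), Nat.add_sub_cancel, Equiv.Perm.coe_inv, Equiv.apply_symm_apply]
      omega

/-- The involution of `ℕ` swapping the blocks `{0,…,d-1}` and `{d,…,2d-1}`. -/
def theta (d : ℕ) : Equiv.Perm ℕ :=
  Function.Involutive.toPerm
    (fun k => if k < d then k + d else if k < 2 * d then k - d else k)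
    (by intro k; dsimp only; split_ifs <;> omega)

open Equiv

/-- The partition of `d` attached to a permutation of `Fin d`. -/
noncomputable def permPartition (d : ℕ) (g : Equiv.Perm (Fin d)) : Nat.Partition d where
  parts := g.partition.parts
  parts_pos := g.partition.parts_pos
  parts_sum := by simpa using g.partition.parts_sum

lemma permPartition_eq_iff {d : ℕ} {g h : Equiv.Perm (Fin d)} :
    permPartition d g = permPartition d h ↔ IsConj g h := by
  rw [Equiv.Perm.partition_eq_of_isConj, Nat.Partition.ext_iff, Nat.Partition.ext_iff]
  exact Iff.rfl

lemma permPartition_surjective (d : ℕ) : Function.Surjective (permPartition d) := by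
  intro P
  set m : Multiset ℕ := P.parts.filter (fun n => 2 ≤ n) with hm
  have hside : m.sum ≤ Fintype.card (Fin d) ∧ ∀ a ∈ m, 2 ≤ a := by
    constructor
    · have : m.sum ≤ P.parts.sum := by
        conv_rhs => rw [← Multiset.filter_add_not (fun n => 2 ≤ n) P.parts]
        rw [Multiset.sum_add]
        exact Nat.le_add_right _ _
      rw [P.parts_sum] at this
      simpa using this
    · intro a ha
      exact (Multiset.mem_filter.mp ha).2
  obtain ⟨g, hg⟩ := (Equiv.Perm.exists_with_cycleType_iff (Fin d) (m := m)).mpr hside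
  refine ⟨g, ?_⟩
  have hs : P.parts.filter (fun n => ¬ 2 ≤ n) =
      Multiset.replicate (P.parts.filter (fun n => ¬ 2 ≤ n)).card 1 := by
    rw [Multiset.eq_replicate_card]
    intro x hx
    have h1 := P.parts_pos (Multiset.mem_of_mem_filter hx)
    have h2 := (Multiset.mem_filter.mp hx).2
    omega
  have hsplit : m + P.parts.filter (fun n => ¬ 2 ≤ n) = P.parts := by
    rw [hm]; exact Multiset.filter_add_not _ _
  have hsum : m.sum + (P.parts.filter (fun n => ¬ 2 ≤ n)).card = d := by
    have h1 := congrArg Multiset.sum hsplit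
    rw [Multiset.sum_add, P.parts_sum] at h1
    have h2 : (P.parts.filter (fun n => ¬ 2 ≤ n)).sum =
        (P.parts.filter (fun n => ¬ 2 ≤ n)).card := by
      conv_lhs => rw [hs]
      rw [Multiset.sum_replicate, smul_eq_mul, mul_one]
    omega
  have hsupp : g.support.card = m.sum := by
    rw [← Equiv.Perm.sum_cycleType, hg]
  apply Nat.Partition.ext
  show g.partition.parts = P.parts
  rw [Equiv.Perm.parts_partition, hg, hsupp, Fintype.card_fin]
  conv_rhs => rw [← hsplit, hs]
  have heq : d - m.sum = (P.parts.filter (fun n => ¬ 2 ≤ n)).card := by omega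
  rw [heq]

lemma card_conjClasses_perm (d : ℕ) :
    Nat.card (ConjClasses (Equiv.Perm (Fin d))) = Fintype.card (Nat.Partition d) := by
  have hbij : Function.Bijective
      (Quotient.lift (permPartition d)
        (fun a b hab => permPartition_eq_iff.mpr hab) :
        ConjClasses (Equiv.Perm (Fin d)) → Nat.Partition d) := by
    constructor
    · intro x y
      refine Quotient.inductionOn₂ x y (fun a b h => ?_)
      exact Quotient.sound (permPartition_eq_iff.mp h)
    · intro P
      obtain ⟨g, hg⟩ := permPartition_surjective d P
      exact ⟨Quotient.mk _ g, hg⟩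
  exact (Nat.card_eq_of_bijective _ hbij).trans Nat.card_eq_fintype_card

/-- The extension of a permutation of `Fin d` to `ℕ`, fixing everything `≥ d`. -/
def low (d : ℕ) (γ : Equiv.Perm (Fin d)) : Equiv.Perm ℕ where
  toFun k := if h : k < d then (γ ⟨k, h⟩ : ℕ) else k
  invFun k := if h : k < d then (γ⁻¹ ⟨k, h⟩ : ℕ) else k
  left_inv k := by
    by_cases h : k < d
    · simp only [dif_pos h, dif_pos (γ ⟨k, h⟩).isLt, Fin.eta, Equiv.Perm.coe_inv, Equiv.symm_apply_apply]
    · simp only [dif_neg h]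
  right_inv k := by
    by_cases h : k < d
    · simp only [dif_pos h, dif_pos (γ⁻¹ ⟨k, h⟩).isLt, dif_pos (γ.symm ⟨k, h⟩).isLt, Fin.eta, Equiv.Perm.coe_inv, Equiv.apply_symm_apply]
    · simp only [dif_neg h]

lemma low_apply_lt {d : ℕ} (γ : Equiv.Perm (Fin d)) {k : ℕ} (h : k < d) :
    low d γ k = γ ⟨k, h⟩ := dif_pos h

lemma low_apply_ge {d : ℕ} (γ : Equiv.Perm (Fin d)) {k : ℕ} (h : d ≤ k) :
    low d γ k = k := dif_neg (by omega)

/-- The block permutation of `ℕ` given by `α` from the lower to the upper block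
and `β` from the upper to the lower block. -/
def blk (d : ℕ) (α β : Equiv.Perm (Fin d)) : Equiv.Perm ℕ where
  toFun k := if h : k < d then (α ⟨k, h⟩ : ℕ) + d else
    if h2 : k - d < d then (β ⟨k - d, h2⟩ : ℕ) else k
  invFun k := if h : k < d then (β⁻¹ ⟨k, h⟩ : ℕ) + d else
    if h2 : k - d < d then (α⁻¹ ⟨k - d, h2⟩ : ℕ) else k
  left_inv k := by
    rcases lt_or_ge k d with h | h
    · have h1 : ¬ ((α ⟨k, h⟩ : ℕ) + d < d) := by omega
      have h2 : (α ⟨k, h⟩ : ℕ) + d - d < d := by have := (α ⟨k, h⟩).isLt; omega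
      simp only [dif_pos h, dif_neg h1, dif_pos h2]
      congr 1
      have : ((α ⟨k, h⟩ : ℕ) + d - d) = (α ⟨k, h⟩ : ℕ) := by omega
      simp_rw [this]
      simp [Fin.eta]
    · rcases lt_or_ge (k - d) d with h2 | h2
      · have h3 : ¬ (k < d) := by omega
        simp only [dif_neg h3, dif_pos h2, dif_pos (β ⟨k - d, h2⟩).isLt, Fin.eta,
          Equiv.Perm.coe_inv, Equiv.symm_apply_apply]
        omega
      · have h3 : ¬ (k < d) := by omega
        simp only [dif_neg h3, dif_neg (by omega : ¬ (k - d < d))]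
  right_inv k := by
    rcases lt_or_ge k d with h | h
    · have h1 : ¬ ((β⁻¹ ⟨k, h⟩ : ℕ) + d < d) := by omega
      have h2 : (β⁻¹ ⟨k, h⟩ : ℕ) + d - d < d := by have := (β⁻¹ ⟨k, h⟩).isLt; omega
      simp only [dif_pos h, dif_neg h1, dif_pos h2]
      have : ((β⁻¹ ⟨k, h⟩ : ℕ) + d - d) = (β⁻¹ ⟨k, h⟩ : ℕ) := by omega
      simp_rw [this]
      simp [Fin.eta]
    · rcases lt_or_ge (k - d) d with h2 | h2
      · have h3 : ¬ (k < d) := by omega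
        simp only [dif_neg h3, dif_pos h2, dif_pos (α⁻¹ ⟨k - d, h2⟩).isLt, dif_pos (α.symm ⟨k - d, h2⟩).isLt, Fin.eta,
          Equiv.Perm.coe_inv, Equiv.apply_symm_apply]
        omega
      · have h3 : ¬ (k < d) := by omega
        simp only [dif_neg h3, dif_neg (by omega : ¬ (k - d < d))]

lemma blk_apply_lt {d : ℕ} (α β : Equiv.Perm (Fin d)) {k : ℕ} (h : k < d) :
    blk d α β k = (α ⟨k, h⟩ : ℕ) + d := dif_pos h

lemma blk_apply_mid {d : ℕ} (α β : Equiv.Perm (Fin d)) {k : ℕ} (h : d ≤ k) (h2 : k - d < d) :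
    blk d α β k = (β ⟨k - d, h2⟩ : ℕ) := by
  show dite _ _ _ = _
  rw [dif_neg (by omega : ¬ k < d), dif_pos h2]

lemma blk_apply_ge {d : ℕ} (α β : Equiv.Perm (Fin d)) {k : ℕ} (h : 2 * d ≤ k) :
    blk d α β k = k := by
  show dite _ _ _ = _
  rw [dif_neg (by omega : ¬ k < d), dif_neg (by omega : ¬ k - d < d)]

/-- The forward map from commuting pairs to the set of interest. -/
def Fmap (d : ℕ) (p : {p : Equiv.Perm (Fin d) × Equiv.Perm (Fin d) // Commute p.1 p.2}) :
    {σ : Equiv.Perm ℕ //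
        (∀ k, 2 * d ≤ k → σ k = k) ∧ (∀ i < d, d ≤ σ i ∧ σ i < 2 * d) ∧
        ∃ τ : Equiv.Perm ℕ, (∀ k, d ≤ k → τ k = k) ∧ σ * σ = τ * shift d τ} := by
  obtain ⟨⟨α, β⟩, hc⟩ := p
  refine ⟨blk d α β, fun k hk => blk_apply_ge α β hk, fun i hi => ?_, ?_⟩
  · rw [blk_apply_lt α β hi]
    have := (α ⟨i, hi⟩).isLt
    omega
  · refine ⟨low d (β * α), fun k hk => low_apply_ge _ hk, ?_⟩
    ext k
    rcases lt_or_ge k d with h | h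
    · have hαlt := (α ⟨k, h⟩).isLt
      rw [Equiv.Perm.mul_apply, Equiv.Perm.mul_apply, blk_apply_lt α β h,
        blk_apply_mid α β (by omega) (by omega : (α ⟨k, h⟩ : ℕ) + d - d < d)]
      have he : ((α ⟨k, h⟩ : ℕ) + d - d) = (α ⟨k, h⟩ : ℕ) := by omega
      show _ = (low d (β * α)) ((shift d (low d (β * α))) k)
      have hs : (shift d (low d (β * α))) k = k := if_pos h
      rw [hs, low_apply_lt _ h]
      simp_rw [he]
      simp [Fin.eta]
    · rcases lt_or_ge k (2 * d) with h2 | h2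
      · have hkd : k - d < d := by omega
        have hβlt := (β ⟨k - d, hkd⟩).isLt
        rw [Equiv.Perm.mul_apply, Equiv.Perm.mul_apply, blk_apply_mid α β h hkd,
          blk_apply_lt α β hβlt]
        show _ = (low d (β * α)) ((shift d (low d (β * α))) k)
        have hs : (shift d (low d (β * α))) k = (low d (β * α)) (k - d) + d := if_neg (by omega)
        rw [hs, low_apply_lt _ hkd, low_apply_ge _ (by omega)]
        have : α (β ⟨k - d, hkd⟩) = β (α ⟨k - d, hkd⟩) := by
          have := congrArg (fun (g : Equiv.Perm (Fin d)) => g ⟨k - d, hkd⟩) hc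
          simpa using this
        simp [Fin.eta, this]
      · rw [Equiv.Perm.mul_apply, Equiv.Perm.mul_apply, blk_apply_ge α β h2,
          blk_apply_ge α β h2]
        show _ = (low d (β * α)) ((shift d (low d (β * α))) k)
        have hs : (shift d (low d (β * α))) k = (low d (β * α)) (k - d) + d := if_neg (by omega)
        rw [hs, low_apply_ge _ (by omega), low_apply_ge _ (by omega)]
        omega

lemma shift_apply (d : ℕ) (τ : Equiv.Perm ℕ) (k : ℕ) :
    shift d τ k = if k < d then k else τ (k - d) + d := rfl

lemma Fmap_injective (d : ℕ) : Function.Injective (Fmap d) := by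
  rintro ⟨⟨α, β⟩, hc⟩ ⟨⟨α', β'⟩, hc'⟩ h
  have hσ : blk d α β = blk d α' β' := congrArg Subtype.val h
  have hα : α = α' := by
    ext i
    have := congrArg (fun (g : Equiv.Perm ℕ) => g (i : ℕ)) hσ
    simp only [blk_apply_lt _ _ i.isLt, Fin.eta] at this
    omega
  have hβ : β = β' := by
    ext i
    have := congrArg (fun (g : Equiv.Perm ℕ) => g ((i : ℕ) + d)) hσ
    have hm : (i : ℕ) + d - d < d := by have := i.isLt; omega
    simp only [blk_apply_mid _ _ (by omega : d ≤ (i : ℕ) + d) hm] at this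
    have he : ((i : ℕ) + d - d) = (i : ℕ) := by omega
    simp_rw [he, Fin.eta] at this
    omega
  subst hα; subst hβ; rfl

lemma Fmap_surjective (d : ℕ) : Function.Surjective (Fmap d) := by
  rintro ⟨σ, h2d, hblk, τ, hτfix, hτ⟩
  -- σ maps [d, 2d) into [0, d)
  have hL1 : ∀ k, d ≤ k → k < 2 * d → σ k < d := by
    intro k hk1 hk2
    have hne : σ k < 2 * d := by
      by_contra hge
      push_neg at hge
      have := h2d (σ k) hge
      have := σ.injective this
      omega
    by_contra hge
    push_neg at hge
    -- image of range d under σ is exactly Ico d (2d)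
    have hsub : (Finset.range d).image σ ⊆ Finset.Ico d (2 * d) := by
      intro x hx
      obtain ⟨i, hi, rfl⟩ := Finset.mem_image.mp hx
      rw [Finset.mem_range] at hi
      obtain ⟨h1, h2⟩ := hblk i hi
      exact Finset.mem_Ico.mpr ⟨h1, h2⟩
    have hcard : ((Finset.range d).image σ).card = d := by
      rw [Finset.card_image_of_injective _ σ.injective, Finset.card_range]
    have heq : (Finset.range d).image σ = Finset.Ico d (2 * d) := by
      apply Finset.eq_of_subset_of_card_le hsub
      rw [hcard, Nat.card_Ico]
      omega
    have : σ k ∈ (Finset.range d).image σ := by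
      rw [heq, Finset.mem_Ico]
      omega
    obtain ⟨i, hi, hie⟩ := Finset.mem_image.mp this
    rw [Finset.mem_range] at hi
    have := σ.injective hie
    omega
  -- the equations from σ² = τ · shift d τ
  have hE1 : ∀ i, i < d → σ (σ i) = τ i := by
    intro i hi
    have := congrArg (fun (g : Equiv.Perm ℕ) => g i) hτ
    simp only [Equiv.Perm.mul_apply] at this
    rwa [shift_apply, if_pos hi] at this
  have hE2 : ∀ k, d ≤ k → k < 2 * d → σ (σ k) = τ (k - d) + d := by
    intro k hk1 hk2
    have := congrArg (fun (g : Equiv.Perm ℕ) => g k) hτ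
    simp only [Equiv.Perm.mul_apply] at this
    rw [shift_apply, if_neg (by omega : ¬ k < d)] at this
    rwa [hτfix (τ (k - d) + d) (by omega)] at this
  have hτlt : ∀ i, i < d → τ i < d := by
    intro i hi
    by_contra hge
    push_neg at hge
    have := hτfix (τ i) hge
    have := τ.injective this
    omega
  -- define the pair
  have ha_inj : Function.Injective (fun i : Fin d =>
      (⟨σ i - d, by obtain ⟨h1, h2⟩ := hblk i i.isLt; omega⟩ : Fin d)) := by
    intro i j hij
    have h1 := hblk i i.isLt
    have h2 := hblk j j.isLt
    have : σ (i : ℕ) = σ (j : ℕ) := by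
      have := congrArg (fun x : Fin d => (x : ℕ)) hij
      simp only at this
      omega
    have := σ.injective this
    exact Fin.ext (by omega)
  have hb_inj : Function.Injective (fun j : Fin d =>
      (⟨σ ((j : ℕ) + d), hL1 _ (by omega) (by have := j.isLt; omega)⟩ : Fin d)) := by
    intro i j hij
    have : σ ((i : ℕ) + d) = σ ((j : ℕ) + d) := by
      have := congrArg (fun x : Fin d => (x : ℕ)) hij
      simpa using this
    have := σ.injective this
    exact Fin.ext (by omega)
  set α := Equiv.ofBijective _ (Finite.injective_iff_bijective.mp ha_inj) with hαdef
  set β := Equiv.ofBijective _ (Finite.injective_iff_bijective.mp hb_inj) with hβdef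
  have hαval : ∀ i : Fin d, (α i : ℕ) = σ i - d := fun i => rfl
  have hβval : ∀ j : Fin d, (β j : ℕ) = σ ((j : ℕ) + d) := fun j => rfl
  have hcomm : Commute α β := by
    ext x
    have hx := x.isLt
    have hab : σ (σ ((x : ℕ) + d)) = τ (x : ℕ) + d := by
      have := hE2 ((x : ℕ) + d) (by omega) (by omega)
      simpa using this
    have hba : σ (σ (x : ℕ)) = τ (x : ℕ) := hE1 _ hx
    obtain ⟨hσx1, hσx2⟩ := hblk (x : ℕ) hx
    show ((α * β) x : ℕ) = ((β * α) x : ℕ)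
    rw [Equiv.Perm.mul_apply, Equiv.Perm.mul_apply, hαval, hβval, hβval, hαval]
    have he : σ (x : ℕ) - d + d = σ (x : ℕ) := by omega
    rw [he, hab, hba]
    omega
  refine ⟨⟨⟨α, β⟩, hcomm⟩, ?_⟩
  apply Subtype.ext
  show blk d α β = σ
  ext k
  rcases lt_or_ge k d with h | h
  · rw [blk_apply_lt α β h]
    have := (hblk k h).1
    have : (α ⟨k, h⟩ : ℕ) = σ k - d := hαval _
    omega
  · rcases lt_or_ge k (2 * d) with h2 | h2
    · rw [blk_apply_mid α β h (by omega), hβval]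
      show σ (k - d + d) = σ k
      congr 1
      omega
    · rw [blk_apply_ge α β h2, h2d k h2]


/-- The number of permutations `σ` of `{0,…,2d-1}` mapping `{0,…,d-1}` onto
`{d,…,2d-1}` and such that `σ²` has the form `τ·ω^d(τ)` for some permutation `τ`
of `{0,…,d-1}`, equals `p(d)·d!` where `p(d)` is the number of partitions of `d`. -/
theorem stmt_6 (d : ℕ) (hd : 2 ≤ d) :
    Nat.card {σ : Equiv.Perm ℕ //
        (∀ k, 2 * d ≤ k → σ k = k) ∧ (∀ i < d, d ≤ σ i ∧ σ i < 2 * d) ∧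
        ∃ τ : Equiv.Perm ℕ, (∀ k, d ≤ k → τ k = k) ∧ σ * σ = τ * shift d τ} =
      Fintype.card (Nat.Partition d) * Nat.factorial d := by
  have hbij : Function.Bijective (Fmap d) := ⟨Fmap_injective d, Fmap_surjective d⟩
  rw [← Nat.card_eq_of_bijective (Fmap d) hbij, card_comm_eq_card_conjClasses_mul_card,
    card_conjClasses_perm, Nat.card_eq_fintype_card, Fintype.card_perm, Fintype.card_fin]
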